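/- For a linear system the empirical Gramian computes the unobservability level exactly: inf { ∫_0^T ‖y_{x̂}(t) − y_{x0}(t)‖² dt : x̂ = x0 + Σ_{i=1}^s a_i e_i with Σ_{i=1}^s a_i² = ρ² } = σ_min ρ², where σ_min is the smallest eigenvalue of the symmetric matrix G. -/

import Mathlib

open Filter Topology
open scoped Matrix

/-- For a linear system, the empirical Gramian computes the unobservability level exactly:
the infimum of the squared `L²` output deviation over perturbations of Euclidean size `ρ`
inside the span of the orthonormal family `e` equals `σ_min · ρ²`,
where `σ_min` is the smallest eigenvalue of the empirical Gramian `G`. -/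
theorem empirical_gramian_exact_linear
    (n p s : ℕ) (hn : 0 < n) (hp : 0 < p) (hs : 0 < s)
    (A : Matrix (Fin n) (Fin n) ℝ) (C : Matrix (Fin p) (Fin n) ℝ)
    (T ρ : ℝ) (hT : 0 < T) (hρ : 0 < ρ)
    -- the output map `y_x(t) = C e^{tA} x`
    (y : (Fin n → ℝ) → ℝ → (Fin p → ℝ))
    (hy : ∀ x t, y x t = C.mulVec ((NormedSpace.exp (t • A)).mulVec x))
    -- an orthonormal family in ℝⁿ (Euclidean inner product)
    (e : Fin s → (Fin n → ℝ))
    (he : ∀ i j, (∑ k, e i k * e j k) = if i = j then (1:ℝ) else 0)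
    (x0 : Fin n → ℝ)
    -- the output deviations `Δy_i` and the empirical Gramian `G`
    (Δy : Fin s → ℝ → (Fin p → ℝ))
    (hΔy : ∀ i t, Δy i t = y (x0 + ρ • e i) t - y (x0 - ρ • e i) t)
    (G : Matrix (Fin s) (Fin s) ℝ)
    (hG : ∀ i j, G i j = (1 / (4 * ρ ^ 2)) * ∫ t in (0:ℝ)..T, ∑ k, Δy i t k * Δy j t k)
    -- `σmin` is the smallest eigenvalue of the symmetric matrix `G`
    (σmin : ℝ)
    (hσ : IsLeast {σ : ℝ | ∃ ξ : Fin s → ℝ, ξ ≠ 0 ∧ G.mulVec ξ = σ • ξ} σmin) :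
    sInf {r : ℝ | ∃ a : Fin s → ℝ, (∑ i, (a i) ^ 2) = ρ ^ 2 ∧
        r = ∫ t in (0:ℝ)..T, ∑ k, (y (x0 + ∑ i, a i • e i) t k - y x0 t k) ^ 2} =
      σmin * ρ ^ 2 := by
  classical
  have hρ0 : ρ ≠ 0 := ne_of_gt hρ
  set M : ℝ → Matrix (Fin p) (Fin n) ℝ := fun t => C * NormedSpace.exp (t • A) with hM
  have hy' : ∀ x t, y x t = (M t).mulVec x := by
    intro x t
    rw [hy, hM, Matrix.mulVec_mulVec]
  -- continuity
  have hMc : Continuous M := by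
    have h1 : Continuous fun t : ℝ => NormedSpace.exp (t • A) := by
      letI : NormedRing (Matrix (Fin n) (Fin n) ℝ) := Matrix.linftyOpNormedRing
      letI : NormedAlgebra ℝ (Matrix (Fin n) (Fin n) ℝ) := Matrix.linftyOpNormedAlgebra
      letI : NormedAlgebra ℚ (Matrix (Fin n) (Fin n) ℝ) := NormedAlgebra.restrictScalars ℚ ℝ _
      exact NormedSpace.exp_continuous.comp (continuous_id.smul continuous_const)
    exact continuous_const.matrix_mul h1
  set w : Fin s → ℝ → Fin p → ℝ := fun i t => (M t).mulVec (e i) with hw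
  have hwc : ∀ i k, Continuous fun t => w i t k := by
    intro i k
    simp only [hw, Matrix.mulVec, dotProduct]
    exact continuous_finset_sum _ fun j _ => (hMc.matrix_elem k j).mul continuous_const
  set g : Fin s → Fin s → ℝ → ℝ := fun i j t => ∑ k, w i t k * w j t k with hg
  have hgc : ∀ i j, Continuous (g i j) := fun i j =>
    continuous_finset_sum _ fun k _ => (hwc i k).mul (hwc j k)
  -- Δy in terms of w
  have hΔ : ∀ i t k, Δy i t k = 2 * ρ * w i t k := by
    intro i t k
    rw [hΔy, Pi.sub_apply, hy', hy', Matrix.mulVec_add, Matrix.mulVec_sub,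
      Matrix.mulVec_smul]
    simp only [Pi.add_apply, Pi.sub_apply, Pi.smul_apply, smul_eq_mul, hw]
    ring
  -- G entries as integrals of g
  have hGeq : ∀ i j, G i j = ∫ t in (0:ℝ)..T, g i j t := by
    intro i j
    rw [hG]
    have h1 : ∀ t, (∑ k, Δy i t k * Δy j t k) = (4 * ρ ^ 2) * g i j t := by
      intro t
      rw [hg, Finset.mul_sum]
      refine Finset.sum_congr rfl fun k _ => ?_
      rw [hΔ, hΔ]; ring
    simp_rw [h1]
    rw [intervalIntegral.integral_const_mul]
    field_simp
  -- the quadratic-form identity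
  have hquad : ∀ a : Fin s → ℝ,
      (∫ t in (0:ℝ)..T, ∑ k, (y (x0 + ∑ i, a i • e i) t k - y x0 t k) ^ 2)
        = ∑ i, ∑ j, a i * a j * G i j := by
    intro a
    have hpt : ∀ t, (∑ k, (y (x0 + ∑ i, a i • e i) t k - y x0 t k) ^ 2)
        = ∑ i, ∑ j, a i * a j * g i j t := by
      intro t
      have hv : ∀ k, y (x0 + ∑ i, a i • e i) t k - y x0 t k = ∑ i, a i * w i t k := by
        intro k
        have h2 : (M t) *ᵥ (∑ i, a i • e i) = ∑ i, a i • ((M t) *ᵥ (e i)) := by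
          have h3 := map_sum ((M t).mulVecLin) (fun i => a i • e i) Finset.univ
          simp only [LinearMap.map_smul, Matrix.mulVecLin_apply] at h3
          exact h3
        rw [hy', hy', Matrix.mulVec_add, h2]
        simp [Finset.sum_apply, Pi.smul_apply, smul_eq_mul, hw]
      calc (∑ k, (y (x0 + ∑ i, a i • e i) t k - y x0 t k) ^ 2)
          = ∑ k, (∑ i, a i * w i t k) * (∑ j, a j * w j t k) := by
            refine Finset.sum_congr rfl fun k _ => ?_
            rw [hv k, sq]
        _ = ∑ k, ∑ i, ∑ j, (a i * w i t k) * (a j * w j t k) := by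
            refine Finset.sum_congr rfl fun k _ => ?_
            rw [Finset.sum_mul_sum]
        _ = ∑ i, ∑ k, ∑ j, (a i * w i t k) * (a j * w j t k) := Finset.sum_comm
        _ = ∑ i, ∑ j, ∑ k, (a i * w i t k) * (a j * w j t k) :=
            Finset.sum_congr rfl fun i _ => Finset.sum_comm
        _ = ∑ i, ∑ j, a i * a j * g i j t := by
            refine Finset.sum_congr rfl fun i _ => Finset.sum_congr rfl fun j _ => ?_
            rw [hg, Finset.mul_sum]
            exact Finset.sum_congr rfl fun k _ => by ring
    simp_rw [hpt]
    rw [intervalIntegral.integral_finset_sum (fun i _ =>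
      (continuous_finset_sum _ fun j _ =>
        (show Continuous fun t => a i * a j * g i j t from continuous_const.mul (hgc i j))).intervalIntegrable _ _)]
    refine Finset.sum_congr rfl fun i _ => ?_
    rw [intervalIntegral.integral_finset_sum (fun j _ =>
      (show Continuous fun t => a i * a j * g i j t from continuous_const.mul (hgc i j)).intervalIntegrable _ _)]
    refine Finset.sum_congr rfl fun j _ => ?_
    rw [intervalIntegral.integral_const_mul, hGeq]
  -- rewrite the double sum as a dot product
  have hdot : ∀ a : Fin s → ℝ,
      (∑ i, ∑ j, a i * a j * G i j) = dotProduct a (G.mulVec a) := by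
    intro a
    simp only [dotProduct, Matrix.mulVec, Finset.mul_sum]
    exact Finset.sum_congr rfl fun i _ => Finset.sum_congr rfl fun j _ => by ring
  -- G is symmetric
  have hGsym : G.IsHermitian := by
    rw [Matrix.IsHermitian]
    ext i j
    rw [Matrix.conjTranspose_apply, star_trivial, hG, hG]
    congr 1
    apply intervalIntegral.integral_congr
    intro t _
    exact Finset.sum_congr rfl fun k _ => mul_comm _ _
  set lam := hGsym.eigenvalues with hlam
  set B : Matrix (Fin s) (Fin s) ℝ :=
    Matrix.of (fun i k => hGsym.eigenvectorBasis i k) with hB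
  have horth : ∀ i j,
      (∑ k, hGsym.eigenvectorBasis i k * hGsym.eigenvectorBasis j k)
        = if i = j then (1:ℝ) else 0 := by
    intro i j
    have hh := hGsym.eigenvectorBasis.orthonormal
    rw [orthonormal_iff_ite] at hh
    have h2 := hh i j
    rw [PiLp.inner_apply] at h2
    simpa [mul_comm] using h2
  have hBBt : B * Bᵀ = 1 := by
    ext i j
    simpa [Matrix.mul_apply, Matrix.one_apply, hB] using horth i j
  have hBtB : Bᵀ * B = 1 := mul_eq_one_comm.mp hBBt
  have hGBt : G * Bᵀ = Bᵀ * Matrix.diagonal lam := by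
    ext k i
    have h3 := congrFun (hGsym.mulVec_eigenvectorBasis i) k
    simp only [Matrix.mulVec, dotProduct, Pi.smul_apply, smul_eq_mul] at h3
    calc (G * Bᵀ) k i = ∑ j, G k j * hGsym.eigenvectorBasis i j := by
          simp [Matrix.mul_apply, hB]
      _ = lam i * hGsym.eigenvectorBasis i k := h3
      _ = (Bᵀ * Matrix.diagonal lam) k i := by
          simp [Matrix.mul_apply, Matrix.diagonal_apply, hB, mul_ite, mul_zero,
            Finset.sum_ite_eq, mul_comm]
  have hiso : ∀ u v : Fin s → ℝ,
      dotProduct (Bᵀ *ᵥ u) (Bᵀ *ᵥ v) = dotProduct u v := by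
    intro u v
    rw [Matrix.dotProduct_mulVec, Matrix.vecMul_transpose, Matrix.mulVec_mulVec,
      hBBt, Matrix.one_mulVec]
  have hrecover : ∀ a : Fin s → ℝ, a = Bᵀ *ᵥ (B *ᵥ a) := by
    intro a
    rw [Matrix.mulVec_mulVec, hBtB, Matrix.one_mulVec]
  have hq1' : ∀ c : Fin s → ℝ,
      dotProduct (Bᵀ *ᵥ c) (G *ᵥ (Bᵀ *ᵥ c)) = ∑ i, lam i * (c i) ^ 2 := by
    intro c
    rw [Matrix.mulVec_mulVec, hGBt, ← Matrix.mulVec_mulVec, hiso]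
    simp only [dotProduct, Matrix.mulVec_diagonal]
    exact Finset.sum_congr rfl fun i _ => by ring
  have hq1 : ∀ a : Fin s → ℝ,
      dotProduct a (G.mulVec a) = ∑ i, lam i * ((B *ᵥ a) i) ^ 2 := by
    intro a
    conv_lhs => rw [hrecover a]
    exact hq1' (B *ᵥ a)
  have hq2 : ∀ a : Fin s → ℝ, (∑ i, (a i) ^ 2) = ∑ i, ((B *ᵥ a) i) ^ 2 := by
    intro a
    have h4 := hiso (B *ᵥ a) (B *ᵥ a)
    rw [← hrecover a] at h4
    simpa [dotProduct, sq] using h4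
  have hminlam : ∀ i, σmin ≤ lam i := by
    intro i
    refine hσ.2 ⟨hGsym.eigenvectorBasis i, ?_, hGsym.mulVec_eigenvectorBasis i⟩
    exact (WithLp.ofLp_eq_zero 2).not.mpr (hGsym.eigenvectorBasis.orthonormal.ne_zero i)
  -- lower bound
  have hlb : ∀ a : Fin s → ℝ, (∑ i, (a i) ^ 2) = ρ ^ 2 →
      σmin * ρ ^ 2 ≤ ∑ i, ∑ j, a i * a j * G i j := by
    intro a ha
    rw [hdot, hq1]
    calc σmin * ρ ^ 2 = σmin * ∑ i, ((B *ᵥ a) i) ^ 2 := by rw [← hq2, ha]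
      _ = ∑ i, σmin * ((B *ᵥ a) i) ^ 2 := Finset.mul_sum _ _ _
      _ ≤ ∑ i, lam i * ((B *ᵥ a) i) ^ 2 := Finset.sum_le_sum fun i _ =>
            mul_le_mul_of_nonneg_right (hminlam i) (sq_nonneg _)
  -- the minimum is attained
  obtain ⟨ξ, hξ0, hξ⟩ := hσ.1
  have hξpos : 0 < ∑ i, ξ i ^ 2 := by
    obtain ⟨i, hi⟩ := Function.ne_iff.mp hξ0
    refine Finset.sum_pos' (fun j _ => sq_nonneg _) ⟨i, Finset.mem_univ i, ?_⟩
    have : ξ i ≠ 0 := hi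
    positivity
  set N := Real.sqrt (∑ i, ξ i ^ 2) with hN
  have hNpos : 0 < N := Real.sqrt_pos.mpr hξpos
  have hN2 : N ^ 2 = ∑ i, ξ i ^ 2 := Real.sq_sqrt hξpos.le
  set a0 : Fin s → ℝ := fun i => (ρ / N) * ξ i with ha0
  have ha0sum : (∑ i, a0 i ^ 2) = ρ ^ 2 := by
    have : (∑ i, a0 i ^ 2) = (ρ / N) ^ 2 * ∑ i, ξ i ^ 2 := by
      rw [Finset.mul_sum]
      exact Finset.sum_congr rfl fun i _ => by rw [ha0]; ring
    rw [this, ← hN2, div_pow]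
    field_simp
  have ha0q : (∑ i, ∑ j, a0 i * a0 j * G i j) = σmin * ρ ^ 2 := by
    rw [hdot]
    have h5 : a0 = (ρ / N) • ξ := by
      funext i; simp [ha0, smul_eq_mul]
    have h6 : G *ᵥ a0 = σmin • a0 := by
      rw [h5, Matrix.mulVec_smul, hξ, smul_comm]
    rw [h6]
    have h7 : dotProduct a0 (σmin • a0) = σmin * ∑ i, a0 i ^ 2 := by
      unfold dotProduct
      rw [Finset.mul_sum]
      refine Finset.sum_congr rfl fun i _ => ?_
      simp only [Pi.smul_apply, smul_eq_mul]
      ring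
    rw [h7, ha0sum]
  have hmem : σmin * ρ ^ 2 ∈ {r : ℝ | ∃ a : Fin s → ℝ, (∑ i, (a i) ^ 2) = ρ ^ 2 ∧
      r = ∫ t in (0:ℝ)..T, ∑ k, (y (x0 + ∑ i, a i • e i) t k - y x0 t k) ^ 2} :=
    ⟨a0, ha0sum, by rw [hquad a0]; exact ha0q.symm⟩
  have hbdd : ∀ r ∈ {r : ℝ | ∃ a : Fin s → ℝ, (∑ i, (a i) ^ 2) = ρ ^ 2 ∧
      r = ∫ t in (0:ℝ)..T, ∑ k, (y (x0 + ∑ i, a i • e i) t k - y x0 t k) ^ 2},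
      σmin * ρ ^ 2 ≤ r := by
    rintro r ⟨a, ha, rfl⟩
    rw [hquad a]
    exact hlb a ha
  exact le_antisymm (csInf_le ⟨σmin * ρ ^ 2, hbdd⟩ hmem) (le_csInf ⟨_, hmem⟩ hbdd)
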